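/- For 1 ≤ i ≤ n-1 the generating series identity a_{0i}(u) = ∏_{j=0}^{i-1} a_{01}(u-j) · ∏_{j=1}^{i-1} ∏_{l=1}^{i-j} h_j(u - l - (j-1)/2) follows by induction from the defining relations a_{0i}(u+(i-1)/2)^{-1} a_{0i}(u+(i+1)/2)^{-1} a_{0,i-1}(u+(i-1)/2) a_{0,i+1}(u+(i+1)/2) = h_i(u) and a_{00}(u) = 1. -/
import Mathlib

open Finset

section Aux
variable {R : Type*} [CommRing R]

/-- auxiliary: the `h`-factor -/
private def Tt (S : ℚ → R ≃+* R) (h : ℕ → R) (j l : ℕ) : R :=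
  S (-(l:ℚ) - ((j:ℚ) - 1)/2) (h j)

/-- auxiliary: the claimed product formula -/
private def Ff (S : ℚ → R ≃+* R) (a1 : R) (h : ℕ → R) (m : ℕ) : R :=
  (∏ j ∈ Finset.range m, S (-(j:ℚ)) a1) *
    ∏ j ∈ Finset.Icc 1 (m-1), ∏ l ∈ Finset.Icc 1 (m-j), Tt S h j l

private lemma S_zero (S : ℚ → R ≃+* R)
    (hS : ∀ (c c' : ℚ) (r : R), S (c + c') r = S c (S c' r)) (r : R) :
    S 0 r = r := by
  have h0 := hS 0 0 r
  rw [add_zero] at h0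
  exact (S 0).injective h0.symm

private lemma inner_step (S : ℚ → R ≃+* R)
    (hS : ∀ (c c' : ℚ) (r : R), S (c + c') r = S c (S c' r))
    (h : ℕ → R) (j s : ℕ) :
    ∏ l ∈ Finset.Icc 1 (s+1), Tt S h j l
      = Tt S h j 1 * S (-1) (∏ l ∈ Finset.Icc 1 s, Tt S h j l) := by
  induction s with
  | zero => simp [map_one]
  | succ s ih =>
    have hTs : S (-1) (Tt S h j (s+1)) = Tt S h j (s+2) := by
      rw [Tt, Tt, ← hS]
      congr 1
      push_cast
      ring
    conv_rhs => rw [Finset.prod_Icc_succ_top (show (1:ℕ) ≤ s+1 by omega), map_mul]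
    rw [Finset.prod_Icc_succ_top (show (1:ℕ) ≤ s+2 by omega), ih, hTs]
    ring

private lemma P_step (S : ℚ → R ≃+* R)
    (hS : ∀ (c c' : ℚ) (r : R), S (c + c') r = S c (S c' r))
    (a1 : R) (m : ℕ) :
    (∏ j ∈ Finset.range (m+1), S (-(j:ℚ)) a1)
      = a1 * S (-1) (∏ j ∈ Finset.range m, S (-(j:ℚ)) a1) := by
  rw [Finset.prod_range_succ', map_prod]
  simp only [Nat.cast_zero, neg_zero, S_zero S hS]
  rw [mul_comm]
  congr 1
  refine Finset.prod_congr rfl fun j _ => ?_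
  rw [← hS]
  congr 1
  push_cast
  ring

private lemma Q_step (S : ℚ → R ≃+* R)
    (hS : ∀ (c c' : ℚ) (r : R), S (c + c') r = S c (S c' r))
    (h : ℕ → R) (m : ℕ) :
    (∏ j ∈ Finset.Icc 1 ((m+1)-1), ∏ l ∈ Finset.Icc 1 ((m+1)-j), Tt S h j l)
      = (∏ j ∈ Finset.Icc 1 m, Tt S h j 1)
        * S (-1) (∏ j ∈ Finset.Icc 1 (m-1), ∏ l ∈ Finset.Icc 1 (m-j), Tt S h j l) := by
  have e1 : (∏ j ∈ Finset.Icc 1 ((m+1)-1), ∏ l ∈ Finset.Icc 1 ((m+1)-j), Tt S h j l)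
      = ∏ j ∈ Finset.Icc 1 m, (Tt S h j 1 * S (-1) (∏ l ∈ Finset.Icc 1 (m-j), Tt S h j l)) := by
    refine Finset.prod_congr (by simp) fun j hj => ?_
    rw [Finset.mem_Icc] at hj
    have : (m+1) - j = (m - j) + 1 := by omega
    rw [this, inner_step S hS]
  rw [e1, Finset.prod_mul_distrib, ← map_prod]
  congr 2
  rcases Nat.eq_zero_or_pos m with hm | hm
  · subst hm; simp
  · have : m = (m-1) + 1 := by omega
    rw [this]
    rw [Finset.prod_Icc_succ_top (by omega)]
    simp

private lemma F_step (S : ℚ → R ≃+* R)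
    (hS : ∀ (c c' : ℚ) (r : R), S (c + c') r = S c (S c' r))
    (a1 : R) (h : ℕ → R) (m : ℕ) :
    Ff S a1 h (m+1) = a1 * (∏ j ∈ Finset.Icc 1 m, Tt S h j 1) * S (-1) (Ff S a1 h m) := by
  rw [Ff, Ff, P_step S hS, Q_step S hS, map_mul]
  ring

private lemma key_step (S : ℚ → R ≃+* R)
    (hS : ∀ (c c' : ℚ) (r : R), S (c + c') r = S c (S c' r))
    (a1 : R) (h : ℕ → R) (k : ℕ) :
    Ff S a1 h (k+2) * S (-1) (Ff S a1 h k)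
      = Tt S h (k+1) 1 * S (-1) (Ff S a1 h (k+1)) * Ff S a1 h (k+1) := by
  rw [show k + 2 = (k+1) + 1 from rfl, F_step S hS, F_step S hS a1 h k, map_mul, map_mul,
      Finset.prod_Icc_succ_top (show 1 ≤ k + 1 by omega)]
  ring

end Aux

/-- In a commutative ring of formal series on which the shifts `u ↦ u + c`
act as ring automorphisms `S c`, if `a_{00}(u) = 1` and for `1 ≤ i ≤ n-1`
`h_i(u) = a_{0i}(u+(i-1)/2)^{-1} a_{0i}(u+(i+1)/2)^{-1} a_{0,i-1}(u+(i-1)/2) a_{0,i+1}(u+(i+1)/2)`,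
then `a_{0i}(u) = ∏_{j=0}^{i-1} a_{01}(u-j) · ∏_{j=1}^{i-1} ∏_{l=1}^{i-j} h_j(u-l-(j-1)/2)`. -/
theorem a0i_in_terms_of_a01_and_h
    {R : Type*} [CommRing R] (S : ℚ → R ≃+* R)
    (hS : ∀ (c c' : ℚ) (r : R), S (c + c') r = S c (S c' r))
    (n : ℕ) (a h : ℕ → R)
    (hu : ∀ i, IsUnit (a i))
    (ha0 : a 0 = 1)
    (hrec : ∀ i : ℕ, 1 ≤ i → i ≤ n - 1 →
      h i * S (((i : ℚ) - 1)/2) (a i) * S (((i : ℚ) + 1)/2) (a i)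
        = S (((i : ℚ) - 1)/2) (a (i - 1)) * S (((i : ℚ) + 1)/2) (a (i + 1))) :
    ∀ i : ℕ, 1 ≤ i → i ≤ n - 1 →
      a i = (∏ j ∈ Finset.range i, S (-(j : ℚ)) (a 1))
        * ∏ j ∈ Finset.Icc 1 (i - 1), ∏ l ∈ Finset.Icc 1 (i - j),
            S (-(l : ℚ) - ((j : ℚ) - 1)/2) (h j) := by
  suffices H : ∀ i : ℕ, i ≤ n - 1 → a i = Ff S (a 1) h i by
    intro i _ h2
    exact H i h2
  intro i
  induction i using Nat.strong_induction_on with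
  | _ i IH =>
    intro hin
    match i with
    | 0 =>
      rw [ha0, Ff]
      simp
    | 1 =>
      rw [Ff]
      simp [S_zero S hS]
    | (k+2) =>
      have h1 : a (k+1) = Ff S (a 1) h (k+1) := IH (k+1) (by omega) (by omega)
      have h0 : a k = Ff S (a 1) h k := IH k (by omega) (by omega)
      have hr := hrec (k+1) (by omega) (by omega)
      simp only [Nat.add_sub_cancel] at hr
      -- apply S (-(k+2)/2) to both sides
      have e := congrArg (S (-(((k:ℚ)+2)/2))) hr
      simp only [map_mul, ← hS] at e
      have c1 : -(((k:ℚ)+2)/2) + (((k+1:ℕ):ℚ) - 1)/2 = -1 := by push_cast; ring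
      have c2 : -(((k:ℚ)+2)/2) + (((k+1:ℕ):ℚ) + 1)/2 = 0 := by push_cast; ring
      rw [c1, c2] at e
      rw [S_zero S hS (a (k+1)), S_zero S hS (a (k+1+1))] at e
      have tT : S (-(((k:ℚ)+2)/2)) (h (k+1)) = Tt S h (k+1) 1 := by
        rw [Tt]
        congr 1
        push_cast
        ring
      rw [tT, h1, h0] at e
      have e' : Tt S h (k+1) 1 * S (-1) (Ff S (a 1) h (k+1)) * Ff S (a 1) h (k+1)
          = S (-1) (Ff S (a 1) h k) * a (k+2) := e
      have hunit : IsUnit (S (-1) (Ff S (a 1) h k)) := by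
        rw [← h0]
        exact (hu k).map (S (-1))
      have e2 : S (-1) (Ff S (a 1) h k) * a (k+2)
          = S (-1) (Ff S (a 1) h k) * Ff S (a 1) h (k+2) := by
        rw [← e', ← key_step S hS (a 1) h k]
        ring
      exact hunit.mul_left_cancel e2
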